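/- arXiv:math/9802046 — 5 statements merged into one kernel-verified Lean document; each statement's English description precedes it below -/
import Mathlib

section
/- For all positive integers m and n, φ(m·n) ≤ φ(m) + φ(n). -/
/-- Number of digits of `n` in base `B`. -/
def dig (B n : ℕ) : ℕ := (Nat.digits B n).length

/-- Number of digits needed to write the prime power factorisation of `n` in base `B`. -/
def phi (B n : ℕ) : ℕ :=
  ∑ p ∈ n.factorization.support,
    (dig B p + if n.factorization p = 1 then 0 else dig B (n.factorization p))

/-- `h B n = δ(n) - φ(n)` as an integer. -/
def hEcon (B n : ℕ) : ℤ := (dig B n : ℤ) - (phi B n : ℤ)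

lemma dig_le_of_lt_pow {B x k : ℕ} (hB : 2 ≤ B) (h : x < B ^ k) : dig B x ≤ k := by
  rcases Nat.eq_zero_or_pos x with rfl | hx
  · simp [dig]
  · rw [dig, Nat.digits_len B x (by omega) hx.ne']
    have := Nat.log_lt_of_lt_pow hx.ne' h
    omega

lemma dig_mono {B : ℕ} (hB : 2 ≤ B) {a b : ℕ} (h : a ≤ b) : dig B a ≤ dig B b :=
  Nat.le_digits_len_le B a b h

lemma lt_pow_dig {B x : ℕ} (hB : 2 ≤ B) : x < B ^ dig B x :=
  Nat.lt_base_pow_length_digits (by omega)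

lemma dig_mul_le {B a b : ℕ} (hB : 2 ≤ B) : dig B (a * b) ≤ dig B a + dig B b := by
  apply dig_le_of_lt_pow hB
  rcases Nat.eq_zero_or_pos a with rfl | ha
  · rw [zero_mul]; exact Nat.pow_pos (by omega)
  rcases Nat.eq_zero_or_pos b with rfl | hb
  · rw [mul_zero]; exact Nat.pow_pos (by omega)
  calc a * b < B ^ dig B a * B ^ dig B b :=
        Nat.mul_lt_mul_of_lt_of_lt (lt_pow_dig hB) (lt_pow_dig hB)
    _ = B ^ (dig B a + dig B b) := (pow_add B _ _).symm

/-- the `δ'` function -/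
def dig' (B a : ℕ) : ℕ := if a = 1 then 0 else dig B a

lemma dig'_add {B a b : ℕ} (hB : 2 ≤ B) (ha : 1 ≤ a) (hb : 1 ≤ b) :
    dig' B (a + b) ≤ dig B 2 + dig' B a + dig' B b := by
  have hab : a + b ≤ 2 * a * b := by nlinarith
  have key : dig B (a + b) ≤ dig B 2 + dig B a + dig B b := by
    calc dig B (a + b) ≤ dig B (2 * a * b) := dig_mono hB hab
      _ ≤ dig B (2 * a) + dig B b := dig_mul_le hB
      _ ≤ dig B 2 + dig B a + dig B b := by
          have := dig_mul_le (a := 2) (b := a) hB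
          omega
  rcases eq_or_lt_of_le ha with h1 | h1 <;> rcases eq_or_lt_of_le hb with h2 | h2
  · simp [dig', ← h1, ← h2]
  · have : dig' B (a + b) = dig B (a + b) := by
      simp [dig']; omega
    rw [this, dig', dig', if_pos h1.symm, if_neg (by omega)]
    have : a + b ≤ 2 * b := by omega
    have := dig_mono hB this
    have := dig_mul_le (a := 2) (b := b) hB
    omega
  · have : dig' B (a + b) = dig B (a + b) := by
      simp [dig']; omega
    rw [this, dig', dig', if_neg (by omega), if_pos h2.symm]
    have : a + b ≤ 2 * a := by omega
    have := dig_mono hB this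
    have := dig_mul_le (a := 2) (b := a) hB
    omega
  · have : dig' B (a + b) = dig B (a + b) := by
      simp [dig']; omega
    rw [this, dig', dig', if_neg (by omega), if_neg (by omega)]
    omega

theorem statement_5 (B : ℕ) (hB : 2 ≤ B) (m n : ℕ) (hm : 0 < m) (hn : 0 < n) :
    phi B (m * n) ≤ phi B m + phi B n := by
  classical
  have hfac : (m * n).factorization = m.factorization + n.factorization :=
    Nat.factorization_mul hm.ne' hn.ne'
  set U := (m * n).factorization.support with hU
  have hUm : m.factorization.support ⊆ U := by
    rw [hU, hfac]; exact Finsupp.support_monotone le_self_add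
  have hUn : n.factorization.support ⊆ U := by
    rw [hU, hfac]; exact Finsupp.support_monotone le_add_self
  -- rewrite phi m as a sum over U
  have hm' : phi B m = ∑ p ∈ U,
      (if m.factorization p = 0 then 0 else dig B p + dig' B (m.factorization p)) := by
    rw [phi]
    refine (Finset.sum_congr rfl ?_).trans (Finset.sum_subset hUm ?_)
    · intro p hp
      have : m.factorization p ≠ 0 := Finsupp.mem_support_iff.mp hp
      rw [if_neg this, dig']
    · intro p _ hp
      rw [if_pos (Finsupp.notMem_support_iff.mp hp)]
  have hn' : phi B n = ∑ p ∈ U,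
      (if n.factorization p = 0 then 0 else dig B p + dig' B (n.factorization p)) := by
    rw [phi]
    refine (Finset.sum_congr rfl ?_).trans (Finset.sum_subset hUn ?_)
    · intro p hp
      have : n.factorization p ≠ 0 := Finsupp.mem_support_iff.mp hp
      rw [if_neg this, dig']
    · intro p _ hp
      rw [if_pos (Finsupp.notMem_support_iff.mp hp)]
  rw [hm', hn', ← Finset.sum_add_distrib, phi]
  apply Finset.sum_le_sum
  intro p hp
  have hprime : p.Prime := Nat.prime_of_mem_primeFactors hp
  have h2p : dig B 2 ≤ dig B p := dig_mono hB hprime.two_le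
  have habpos : (m * n).factorization p ≠ 0 := Finsupp.mem_support_iff.mp hp
  have hab : (m * n).factorization p = m.factorization p + n.factorization p := by
    rw [hfac]; rfl
  set a := m.factorization p
  set b := n.factorization p
  rw [hab] at habpos ⊢
  show dig B p + dig' B (a + b) ≤ _
  rcases Nat.eq_zero_or_pos a with ha | ha
  · rw [if_pos ha, ha, zero_add, if_neg (by omega)]
    omega
  rcases Nat.eq_zero_or_pos b with hb | hb
  · rw [if_neg (by omega), if_pos hb, hb, add_zero]
    omega
  · rw [if_neg (by omega), if_neg (by omega)]
    have := dig'_add (a := a) (b := b) hB ha hb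
    omega
end

section
/- For all positive integers m and n, h(m·n) ≥ h(m) + h(n) − 1. -/
namespace StatementAux

def g (B p a : ℕ) : ℕ :=
  if a = 0 then 0 else dig B p + if a = 1 then 0 else dig B a

lemma lt_pow_dig (hB : 2 ≤ B) (n : ℕ) : n < B ^ dig B n :=
  Nat.lt_base_pow_length_digits hB

lemma dig_mono (B : ℕ) {a b : ℕ} (h : a ≤ b) : dig B a ≤ dig B b :=
  Nat.le_digits_len_le B a b h

lemma dig_le_iff (hB : 2 ≤ B) {n k : ℕ} (h : n < B ^ k) : dig B n ≤ k := by
  by_contra hc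
  push_neg at hc
  rcases Nat.eq_zero_or_pos n with rfl | hnpos
  · simp [dig] at hc
  have hlen : dig B n = Nat.log B n + 1 := Nat.digits_len B n hB (by omega)
  have h2 : B ^ (dig B n - 1) ≤ n := by
    rw [hlen]; simpa using Nat.pow_log_le_self B (by omega : n ≠ 0)
  have : B ^ k ≤ B ^ (dig B n - 1) := Nat.pow_le_pow_right (by omega) (by omega)
  omega

lemma dig_add_le (hB : 2 ≤ B) {a b : ℕ} (hab : a ≤ b) :
    dig B (a + b) ≤ dig B b + 1 := by
  apply dig_le_iff hB
  have h1 : b < B ^ dig B b := lt_pow_dig hB b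
  calc a + b ≤ 2 * b := by omega
    _ < 2 * B ^ dig B b := by omega
    _ ≤ B * B ^ dig B b := Nat.mul_le_mul_right _ hB
    _ = B ^ (dig B b + 1) := by ring

lemma dig_pos (hB : 2 ≤ B) {n : ℕ} (hn : n ≠ 0) : 1 ≤ dig B n := by
  rw [dig, Nat.digits_len B n hB hn]; omega

lemma key_ineq (hB : 2 ≤ B) {p : ℕ} (hp : 2 ≤ p) {a b : ℕ} (ha : 1 ≤ a) (hab : a ≤ b) :
    dig B (a + b) ≤ dig B p + ((if a = 1 then 0 else dig B a) +
      (if b = 1 then 0 else dig B b)) := by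
  rcases eq_or_lt_of_le hab with h | h
  · rcases Nat.lt_or_ge b 2 with hb2 | hb2
    · -- a = b = 1
      have hb1 : b = 1 := by omega
      have ha1 : a = 1 := by omega
      subst ha1; subst hb1
      simpa using dig_mono B hp
    · have hb1 : b ≠ 1 := by omega
      simp only [hb1, if_false]
      have := dig_add_le hB hab
      have := dig_pos hB (show p ≠ 0 by omega)
      split <;> omega
  · -- a < b, so b ≥ 2
    have hb1 : b ≠ 1 := by omega
    have := dig_add_le hB hab
    have := dig_pos hB (show p ≠ 0 by omega)
    simp only [hb1, if_false]
    split <;> omega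

lemma g_subadd (hB : 2 ≤ B) {p : ℕ} (hp : 2 ≤ p) (a b : ℕ) :
    g B p (a + b) ≤ g B p a + g B p b := by
  have hdp : 1 ≤ dig B p := dig_pos hB (by omega)
  rcases Nat.eq_zero_or_pos a with rfl | ha
  · simp [g]
  rcases Nat.eq_zero_or_pos b with rfl | hb
  · simp [g]
  have hab0 : a + b ≠ 0 := by omega
  have hab1 : a + b ≠ 1 := by omega
  simp only [g, if_neg hab0, if_neg hab1, if_neg (by omega : a ≠ 0), if_neg (by omega : b ≠ 0)]
  rcases le_total a b with hle | hle
  · have := key_ineq hB hp ha hle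
    omega
  · have := key_ineq hB hp hb hle
    rw [add_comm a b]
    omega

lemma phi_eq_sum (B n : ℕ) (U : Finset ℕ) (hU : n.factorization.support ⊆ U) :
    phi B n = ∑ p ∈ U, g B p (n.factorization p) := by
  have h1 : phi B n = ∑ p ∈ n.factorization.support, g B p (n.factorization p) :=
    Finset.sum_congr rfl (fun p hp => by
      have h0 : n.factorization p ≠ 0 := Finsupp.mem_support_iff.mp hp
      simp [g, h0])
  rw [h1]
  exact Finset.sum_subset hU (fun p _ hp => by
    have h0 := Finsupp.notMem_support_iff.mp hp
    simp [g, h0])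

end StatementAux

theorem statement_7 (B : ℕ) (hB : 2 ≤ B) (m n : ℕ) (hm : 0 < m) (hn : 0 < n) :
    hEcon B m + hEcon B n - 1 ≤ hEcon B (m * n) := by
  open StatementAux in
  have hm0 : m ≠ 0 := hm.ne'
  have hn0 : n ≠ 0 := hn.ne'
  -- digit bound
  have hdig : dig B m + dig B n ≤ dig B (m * n) + 1 := by
    have hlm : dig B m = Nat.log B m + 1 := Nat.digits_len B m hB hm0
    have hln : dig B n = Nat.log B n + 1 := Nat.digits_len B n hB hn0
    have hlmn : dig B (m * n) = Nat.log B (m * n) + 1 :=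
      Nat.digits_len B (m * n) hB (by positivity)
    have hpow : B ^ (Nat.log B m + Nat.log B n) ≤ m * n := by
      rw [pow_add]
      exact Nat.mul_le_mul (Nat.pow_log_le_self B hm0) (Nat.pow_log_le_self B hn0)
    have := (Nat.le_log_iff_pow_le hB (by positivity : m * n ≠ 0)).mpr hpow
    omega
  -- phi bound
  have hphi : phi B (m * n) ≤ phi B m + phi B n := by
    set U := (m * n).factorization.support with hUdef
    have hUm : m.factorization.support ⊆ U := by
      rw [hUdef, Nat.support_factorization, Nat.support_factorization]
      exact Nat.primeFactors_mono (Dvd.intro n rfl) (by positivity)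
    have hUn : n.factorization.support ⊆ U := by
      rw [hUdef, Nat.support_factorization, Nat.support_factorization]
      exact Nat.primeFactors_mono (Dvd.intro_left m rfl) (by positivity)
    rw [phi_eq_sum B (m * n) U subset_rfl, phi_eq_sum B m U hUm, phi_eq_sum B n U hUn,
      ← Finset.sum_add_distrib]
    apply Finset.sum_le_sum
    intro p hp
    have hpprime : p.Prime := Nat.prime_of_mem_primeFactors (by
      rwa [hUdef, Nat.support_factorization] at hp)
    have hfact : (m * n).factorization p = m.factorization p + n.factorization p := by
      rw [Nat.factorization_mul hm0 hn0]; rfl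
    rw [hfact]
    exact g_subadd hB hpprime.two_le _ _
  simp only [hEcon]
  omega
end

section
/- Let r and s be coprime positive integers and let k ≥ 0. Then there are infinitely many positive integers n such that h(n) ≥ k, n is coprime to s, and for every prime p dividing r the exact power of p dividing n equals the exact power of p dividing r (i.e. n.factorization p = r.factorization p for all primes p ∣ r). -/
theorem statement_10 (B : ℕ) (hB : 2 ≤ B) (r s : ℕ) (hr : 0 < r) (hs : 0 < s)
    (hrs : Nat.Coprime r s) (k : ℕ) :
    {n : ℕ | 0 < n ∧ (k : ℤ) ≤ hEcon B n ∧ Nat.Coprime n s ∧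
      ∀ p : ℕ, p.Prime → p ∣ r → n.factorization p = r.factorization p}.Infinite := by
  obtain ⟨p, hple, hp⟩ := Nat.exists_infinite_primes (B ^ 2 + r + s)
  have hpB : B ^ 2 ≤ p := by omega
  have hpr : ¬ p ∣ r := fun h => absurd (Nat.le_of_dvd hr h) (by omega)
  have hps : ¬ p ∣ s := fun h => absurd (Nat.le_of_dvd hs h) (by omega)
  set C := phi B r + dig B p with hC
  -- main membership lemma
  have key : ∀ m : ℕ, k + C + 1 ≤ m → (0 < r * p ^ m ∧ (k : ℤ) ≤ hEcon B (r * p ^ m) ∧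
      Nat.Coprime (r * p ^ m) s ∧
      ∀ q : ℕ, q.Prime → q ∣ r → (r * p ^ m).factorization q = r.factorization q) := by
    intro m hm
    have hm1 : 1 ≤ m := by
      have : 1 ≤ dig B p := by
        simp [dig, Nat.digits_len B p (by omega) hp.pos.ne']
      omega
    have hppos : 0 < p ^ m := pow_pos hp.pos m
    have hn0 : 0 < r * p ^ m := Nat.mul_pos hr hppos
    have hfact : (r * p ^ m).factorization = r.factorization + Finsupp.single p m := by
      rw [Nat.factorization_mul hr.ne' hppos.ne', Nat.Prime.factorization_pow hp]
    have hfp : r.factorization p = 0 := Nat.factorization_eq_zero_of_not_dvd hpr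
    have hpnotmem : p ∉ r.factorization.support := by
      simp [Nat.support_factorization, Nat.mem_primeFactors, hpr]
    have hfq : ∀ q, q ≠ p → (r * p ^ m).factorization q = r.factorization q := by
      intro q hq
      simp [hfact, Finsupp.single_apply, hq.symm]
    refine ⟨hn0, ?_, ?_, ?_⟩
    · -- the hEcon bound
      have hdig : 2 * m + 1 ≤ dig B (r * p ^ m) := by
        have hle : B ^ (2 * m) ≤ r * p ^ m := by
          calc B ^ (2 * m) = (B ^ 2) ^ m := by rw [← pow_mul]
          _ ≤ p ^ m := Nat.pow_le_pow_left hpB m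
          _ ≤ r * p ^ m := Nat.le_mul_of_pos_left _ hr
        have := (Nat.le_log_iff_pow_le (by omega) hn0.ne').mpr hle
        rw [dig, Nat.digits_len B _ (by omega) hn0.ne']
        omega
      have hphi : phi B (r * p ^ m) ≤ C + m := by
        have hsupp : (r * p ^ m).factorization.support = r.factorization.support ∪ {p} := by
          rw [hfact, Finsupp.support_add_eq, Finsupp.support_single_ne_zero p (by omega)]
          rw [Finsupp.support_single_ne_zero p (by omega)]
          simpa using hpnotmem
        have hdisj : Disjoint r.factorization.support ({p} : Finset ℕ) := by
          simpa using hpnotmem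
        rw [phi, hsupp, Finset.sum_union hdisj]
        have h1 : ∑ q ∈ r.factorization.support,
            (dig B q + if (r * p ^ m).factorization q = 1 then 0
              else dig B ((r * p ^ m).factorization q)) = phi B r := by
          apply Finset.sum_congr rfl
          intro q hq
          have hqp : q ≠ p := fun h => hpnotmem (h ▸ hq)
          rw [hfq q hqp]
        have hfpm : (r * p ^ m).factorization p = m := by
          simp [hfact, hfp]
        have h2 : (dig B p + if (r * p ^ m).factorization p = 1 then 0
            else dig B ((r * p ^ m).factorization p)) ≤ dig B p + m := by
          rw [hfpm]
          have : dig B m ≤ m := by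
            rw [dig, Nat.digits_len B m (by omega) (by omega)]
            have := Nat.log_lt_self B (x := m) (by omega)
            omega
          split <;> omega
        rw [Finset.sum_singleton, h1]
        omega
      rw [hEcon]
      have h1 : ((2 * m + 1 : ℕ) : ℤ) ≤ (dig B (r * p ^ m) : ℤ) := by exact_mod_cast hdig
      have h2 : ((phi B (r * p ^ m)) : ℤ) ≤ ((C + m : ℕ) : ℤ) := by exact_mod_cast hphi
      push_cast at h1 h2 ⊢
      omega
    · exact Nat.Coprime.mul hrs (Nat.Coprime.pow_left _ ((Nat.Prime.coprime_iff_not_dvd hp).mpr hps))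
    · intro q hq hqr
      have hqp : q ≠ p := by
        rintro rfl; exact hpr hqr
      exact hfq q hqp
  apply Set.infinite_of_forall_exists_gt
  intro a
  refine ⟨r * p ^ (k + C + 1 + a), key _ (by omega), ?_⟩
  calc a < 2 ^ a := Nat.lt_two_pow_self
  _ ≤ p ^ (k + C + 1 + a) := Nat.pow_le_pow_left hp.two_le a |>.trans
      (Nat.pow_le_pow_right hp.pos (by omega))
  _ ≤ r * p ^ (k + C + 1 + a) := Nat.le_mul_of_pos_left _ hr
end

section
/- Assume Dickson's conjecture: for every finite family of linear forms f_i(x) = a_i·x + b_i (i = 1,…,t) with positive integer coefficients a_i and nonnegative integer constants b_i, if there is no integer m > 1 dividing the product f_1(n)·f_2(n)⋯f_t(n) for every natural number n, then there are infinitely many natural numbers n for which all the values f_1(n), …, f_t(n) are simultaneously prime. Then for every base B ≥ 2, every k ≥ 0, and every t ≥ 1, there exists a positive integer N such that all of N, N+1, …, N+t−1 are k-frugal (h(N+j) ≥ k for 0 ≤ j ≤ t−1). -/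
lemma dig_eq_log {B n : ℕ} (hB : 2 ≤ B) (hn : n ≠ 0) : dig B n = Nat.log B n + 1 :=
  Nat.digits_len B n hB hn

lemma dig_le_self {B n : ℕ} (hB : 2 ≤ B) (hn : n ≠ 0) : dig B n ≤ n := by
  rw [dig_eq_log hB hn]; exact Nat.log_lt_self B hn

lemma two_mul_le_two_pow : ∀ n : ℕ, 2 * n ≤ 2 ^ n := by
  intro n
  induction n with
  | zero => norm_num
  | succ n ih =>
    rcases Nat.eq_zero_or_pos n with h | h
    · subst h; norm_num
    · have h2 : 2 ≤ 2 ^ n := Nat.one_lt_two_pow_iff.mpr (by omega)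
      calc 2 * (n+1) = 2*n + 2 := by ring
        _ ≤ 2^n + 2^n := by omega
        _ = 2^(n+1) := by ring

lemma phi_mul_coprime {B a b : ℕ} (ha : a ≠ 0) (hb : b ≠ 0) (hab : Nat.Coprime a b) :
    phi B (a * b) = phi B a + phi B b := by
  have hfact : (a * b).factorization = a.factorization + b.factorization :=
    Nat.factorization_mul ha hb
  have hdisj : Disjoint a.factorization.support b.factorization.support := by
    rw [Nat.support_factorization, Nat.support_factorization]
    exact Nat.Coprime.disjoint_primeFactors hab
  unfold phi
  rw [hfact, Finsupp.support_add_eq hdisj, Finset.sum_union hdisj]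
  congr 1
  · refine Finset.sum_congr rfl fun p hp => ?_
    have hbp : b.factorization p = 0 :=
      Finsupp.notMem_support_iff.mp (Finset.disjoint_left.mp hdisj hp)
    simp [Finsupp.add_apply, hbp]
  · refine Finset.sum_congr rfl fun p hp => ?_
    have hap : a.factorization p = 0 :=
      Finsupp.notMem_support_iff.mp (Finset.disjoint_right.mp hdisj hp)
    simp [Finsupp.add_apply, hap]

lemma phi_prime_pow {B q e : ℕ} (hq : q.Prime) (he : 2 ≤ e) :
    phi B (q ^ e) = dig B q + dig B e := by
  unfold phi
  rw [hq.factorization_pow, Finsupp.support_single_ne_zero _ (by omega : e ≠ 0),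
    Finset.sum_singleton]
  simp only [Finsupp.single_eq_same]
  rw [if_neg (by omega : ¬ (e = 1))]

lemma phi_prime {B p : ℕ} (hp : p.Prime) : phi B p = dig B p := by
  unfold phi
  rw [hp.factorization, Finsupp.support_single_ne_zero _ one_ne_zero, Finset.sum_singleton]
  simp

lemma phi_le {B m : ℕ} (hB : 2 ≤ B) (hm : m ≠ 0) : phi B m ≤ 2 * m * m := by
  have hcard : m.factorization.support.card ≤ m := by
    have hsub : m.factorization.support ⊆ Finset.Icc 1 m := by
      intro p hp
      rw [Nat.support_factorization] at hp
      exact Finset.mem_Icc.mpr ⟨(Nat.prime_of_mem_primeFactors hp).one_lt.le.trans' (by omega),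
        Nat.le_of_mem_primeFactors hp⟩
    calc m.factorization.support.card ≤ (Finset.Icc 1 m).card := Finset.card_le_card hsub
      _ = m := by rw [Nat.card_Icc]; omega
  have hterm : ∀ p ∈ m.factorization.support,
      dig B p + (if m.factorization p = 1 then 0 else dig B (m.factorization p)) ≤ 2 * m := by
    intro p hp
    have hpm : p ≤ m := Nat.le_of_mem_primeFactors (by rwa [Nat.support_factorization] at hp)
    have hp0 : p ≠ 0 := (Nat.prime_of_mem_primeFactors
      (by rwa [Nat.support_factorization] at hp)).ne_zero
    have h1 : dig B p ≤ m := (dig_le_self hB hp0).trans hpm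
    have h2 : (if m.factorization p = 1 then 0 else dig B (m.factorization p)) ≤ m := by
      split
      · omega
      · have hf0 : m.factorization p ≠ 0 := Finsupp.mem_support_iff.mp hp
        exact (dig_le_self hB hf0).trans (Nat.factorization_lt p hm).le
    omega
  calc phi B m ≤ m.factorization.support.card * (2 * m) := by
        unfold phi
        exact Finset.sum_le_card_nsmul _ _ _ hterm
    _ ≤ m * (2 * m) := Nat.mul_le_mul_right _ hcard
    _ = 2 * m * m := by ring

theorem statement_15
    (HDickson : ∀ (t : ℕ) (a b : Fin t → ℕ), (∀ i, 0 < a i) →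
      (¬ ∃ m : ℕ, 1 < m ∧ ∀ n : ℕ, m ∣ ∏ i, (a i * n + b i)) →
      {n : ℕ | ∀ i, Nat.Prime (a i * n + b i)}.Infinite)
    (B : ℕ) (hB : 2 ≤ B) (k : ℕ) (t : ℕ) (ht : 1 ≤ t) :
    ∃ N : ℕ, 0 < N ∧ ∀ j < t, (k : ℤ) ≤ hEcon B (N + j) := by
  classical
  have hB1 : 1 < B := by omega
  -- the small primes
  set P : Finset ℕ := (Finset.range (t+1)).filter Nat.Prime with hPdef
  have hPmem : ∀ r ∈ P, r.Prime ∧ r ≤ t := by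
    intro r hr
    rw [hPdef, Finset.mem_filter, Finset.mem_range] at hr
    exact ⟨hr.2, by omega⟩
  have hPmem' : ∀ r, r.Prime → r ≤ t → r ∈ P := by
    intro r h1 h2
    rw [hPdef, Finset.mem_filter, Finset.mem_range]
    exact ⟨by omega, h1⟩
  set R : ℕ := ∏ r ∈ P, r ^ (t+1) with hRdef
  have hR0 : R ≠ 0 := Finset.prod_ne_zero_iff.mpr fun r hr => pow_ne_zero _ (hPmem r hr).1.ne_zero
  -- the big primes
  set base : ℕ := max t B + 1 with hbase
  have hmono : StrictMono (Nat.nth Nat.Prime) := Nat.nth_strictMono Nat.infinite_setOf_prime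
  set q : ℕ → ℕ := fun j => Nat.nth Nat.Prime (j + base) with hqdef
  have hqprime : ∀ j, (q j).Prime := fun j => Nat.prime_nth_prime _
  have hqgt : ∀ j, t < q j ∧ B ≤ q j := by
    intro j
    have h1 : j + base ≤ q j := hmono.le_apply
    constructor <;> omega
  have hqinj : ∀ i j, q i = q j → i = j := by
    intro i j h
    have := hmono.injective h
    omega
  have hqle : ∀ j ≤ t, q j ≤ q t := fun j hj => hmono.monotone (by omega : j + base ≤ t + base)
  -- constants
  set C : ℕ := 2 * R * R with hCdef
  set D : ℕ := k + q t + C + 1 with hDdef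
  set e : ℕ := 2 ^ D with hedef
  have he2 : 2 ≤ e := by
    have h1 : 2 ^ 1 ≤ 2 ^ D := Nat.pow_le_pow_right (by norm_num) (by omega)
    simpa using h1
  have hekey : k + q t + (D + 1) + C ≤ e := by
    have h1 : 2 * D ≤ 2 ^ D := two_mul_le_two_pow D
    omega
  -- CRT
  set Qd : ℕ := ∏ j ∈ Finset.range t, q j ^ (e+1) with hQdef
  have hQd0 : Qd ≠ 0 :=
    Finset.prod_ne_zero_iff.mpr fun i _ => pow_ne_zero _ (hqprime i).ne_zero
  have hpair1 : Set.Pairwise ↑(Finset.range t) (Function.onFun Nat.Coprime fun j => q j ^ (e+1)) := by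
    intro i _ j _ hij
    exact ((Nat.coprime_primes (hqprime i) (hqprime j)).mpr fun h => hij (hqinj i j h)).pow _ _
  obtain ⟨c1, hc1⟩ := Nat.chineseRemainderOfFinset (fun j => q j ^ e - j)
    (fun j => q j ^ (e+1)) (Finset.range t)
    (fun i _ => pow_ne_zero _ (hqprime i).ne_zero) hpair1
  have hpair2 : Set.Pairwise ↑P (Function.onFun Nat.Coprime fun r => r ^ (t+1)) := by
    intro i hi j hj hij
    exact ((Nat.coprime_primes (hPmem i hi).1 (hPmem j hj).1).mpr hij).pow _ _
  obtain ⟨c2, hc2⟩ := Nat.chineseRemainderOfFinset (fun r => r ^ t)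
    (fun r => r ^ (t+1)) P (fun r hr => pow_ne_zero _ (hPmem r hr).1.ne_zero) hpair2
  have hcopQR : Nat.Coprime Qd R := by
    apply Nat.Coprime.prod_left
    intro i _
    apply Nat.Coprime.prod_right
    intro r hr
    refine Nat.Coprime.pow _ _ ?_
    refine (Nat.coprime_primes (hqprime i) (hPmem r hr).1).mpr fun h => ?_
    have h1 := (hqgt i).1
    have h2 := (hPmem r hr).2
    omega
  obtain ⟨c, hcQ, hcR⟩ := Nat.chineseRemainder hcopQR c1 c2
  -- congruences
  have hcong1 : ∀ j < t, c + j ≡ q j ^ e [MOD q j ^ (e+1)] := by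
    intro j hj
    have hd : q j ^ (e+1) ∣ Qd := Finset.dvd_prod_of_mem _ (Finset.mem_range.mpr hj)
    have h1 : c ≡ q j ^ e - j [MOD q j ^ (e+1)] :=
      (hcQ.of_dvd hd).trans (hc1 j (Finset.mem_range.mpr hj))
    have hje : j ≤ q j ^ e :=
      le_trans (by have := (hqgt j).1; omega) (Nat.le_self_pow (by omega) _)
    have h2 := h1.add_right j
    rwa [Nat.sub_add_cancel hje] at h2
  have hcong2 : ∀ r ∈ P, c ≡ r ^ t [MOD r ^ (t+1)] := fun r hr =>
    (hcR.of_dvd (Finset.dvd_prod_of_mem _ hr)).trans (hc2 r hr)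
  -- divisibility facts
  have hF1 : ∀ j < t, q j ^ e ∣ c + j := by
    intro j hj
    have h := (hcong1 j hj).of_dvd (pow_dvd_pow _ (by omega : e ≤ e+1))
    have h2 : c + j ≡ 0 [MOD q j ^ e] :=
      h.trans (Nat.modEq_zero_iff_dvd.mpr dvd_rfl)
    exact Nat.modEq_zero_iff_dvd.mp h2
  have hF2 : ∀ j < t, ¬ (q j ^ (e+1) ∣ c + j) := by
    intro j hj hdvd
    have h : q j ^ e ≡ 0 [MOD q j ^ (e+1)] :=
      (hcong1 j hj).symm.trans (Nat.modEq_zero_iff_dvd.mpr hdvd)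
    have h2 : q j ^ (e+1) ∣ q j ^ e := Nat.modEq_zero_iff_dvd.mp h
    have h3 := Nat.le_of_dvd (pow_pos (hqprime j).pos _) h2
    have h4 : q j ^ e < q j ^ (e+1) :=
      Nat.pow_lt_pow_right (hqprime j).one_lt (by omega)
    omega
  have hc0 : ∀ j < t, c + j ≠ 0 := by
    intro j hj h
    exact hF2 j hj (h ▸ dvd_zero _)
  have hF3 : ∀ j < t, ∀ i < t, i ≠ j → ¬ (q i ∣ c + j) := by
    intro j hj i hi hij hdvd
    have hdi : q i ∣ c + i := by
      have h := (hcong1 i hi).of_dvd (dvd_pow_self (q i) (by omega : e+1 ≠ 0))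
      have h0 : q i ^ e ≡ 0 [MOD q i] :=
        Nat.modEq_zero_iff_dvd.mpr (dvd_pow_self _ (by omega : e ≠ 0))
      exact Nat.modEq_zero_iff_dvd.mp (h.trans h0)
    have hqi := (hqgt i).1
    rcases Nat.lt_or_ge i j with hlt | hge
    · have h1 : q i ∣ (c+j) - (c+i) := Nat.dvd_sub hdvd hdi
      have h2 : (c+j) - (c+i) = j - i := by omega
      rw [h2] at h1
      have := Nat.le_of_dvd (by omega) h1
      omega
    · have hgt : j < i := by omega
      have h1 : q i ∣ (c+i) - (c+j) := Nat.dvd_sub hdi hdvd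
      have h2 : (c+i) - (c+j) = i - j := by omega
      rw [h2] at h1
      have := Nat.le_of_dvd (by omega) h1
      omega
  have hF4 : ∀ j < t, ∀ r ∈ P, ¬ (r ^ (t+1) ∣ c + j) := by
    intro j hj r hr hdvd
    obtain ⟨hrp, hrt⟩ := hPmem r hr
    have h : c + j ≡ r ^ t + j [MOD r ^ (t+1)] := (hcong2 r hr).add_right j
    have h2 : r ^ t + j ≡ 0 [MOD r ^ (t+1)] :=
      h.symm.trans (Nat.modEq_zero_iff_dvd.mpr hdvd)
    have h3 : r ^ (t+1) ∣ r ^ t + j := Nat.modEq_zero_iff_dvd.mp h2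
    have hle := Nat.le_of_dvd (by have := pow_pos hrp.pos t; omega) h3
    have ht2 : t < 2 ^ t := Nat.lt_two_pow_self (n := t)
    have h2r : 2 ^ t ≤ r ^ t := Nat.pow_le_pow_left hrp.two_le t
    have hrr : 2 * r ^ t ≤ r ^ (t+1) := by
      rw [pow_succ]
      calc 2 * r ^ t = r ^ t * 2 := by ring
        _ ≤ r ^ t * r := Nat.mul_le_mul le_rfl hrp.two_le
    omega
  -- the modulus W
  set W : ℕ := R * Qd with hWdef
  have hW0 : W ≠ 0 := mul_ne_zero hR0 hQd0
  have hWq : ∀ i < t, q i ^ (e+1) ∣ W :=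
    fun i hi => (Finset.dvd_prod_of_mem _ (Finset.mem_range.mpr hi)).mul_left R
  have hWr : ∀ r ∈ P, r ^ (t+1) ∣ W :=
    fun r hr => (Finset.dvd_prod_of_mem _ hr).mul_right Qd
  have hclass : ∀ r, r.Prime → r ∣ W → (∃ i, i < t ∧ r = q i) ∨ r ∈ P := by
    intro r hrp hrW
    rcases (Nat.Prime.dvd_mul hrp).mp hrW with hR' | hQ'
    · right
      obtain ⟨s, hs, hrs⟩ := (Prime.dvd_finset_prod_iff hrp.prime _).mp hR'
      have heq : r = s := (Nat.prime_dvd_prime_iff_eq hrp (hPmem s hs).1).mp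
        (hrp.dvd_of_dvd_pow hrs)
      rwa [heq]
    · left
      obtain ⟨i, hi, hri⟩ := (Prime.dvd_finset_prod_iff hrp.prime _).mp hQ'
      exact ⟨i, Finset.mem_range.mp hi,
        (Nat.prime_dvd_prime_iff_eq hrp (hqprime i)).mp (hrp.dvd_of_dvd_pow hri)⟩
  have hstar : ∀ j < t, ∀ r, r.Prime → r ∣ W →
      (c + j).factorization r < W.factorization r := by
    intro j hj r hrp hrW
    rcases hclass r hrp hrW with ⟨i, hi, rfl⟩ | hrP
    · have h2 : e + 1 ≤ W.factorization (q i) :=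
        (Nat.Prime.pow_dvd_iff_le_factorization (hqprime i) hW0).mp (hWq i hi)
      by_cases hij : i = j
      · subst hij
        have h1 : (c + i).factorization (q i) ≤ e := by
          by_contra h
          exact hF2 i hi
            ((Nat.Prime.pow_dvd_iff_le_factorization (hqprime i) (hc0 i hi)).mpr (by omega))
        omega
      · have h1 : (c + j).factorization (q i) = 0 :=
          Nat.factorization_eq_zero_of_not_dvd (hF3 j hj i hi hij)
        omega
    · have h1 : (c + j).factorization r ≤ t := by
        by_contra h
        exact hF4 j hj r hrP
          ((Nat.Prime.pow_dvd_iff_le_factorization hrp (hc0 j hj)).mpr (by omega))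
      have h2 : t + 1 ≤ W.factorization r :=
        (Nat.Prime.pow_dvd_iff_le_factorization hrp hW0).mp (hWr r hrP)
      omega
  -- gcd structure
  set g : ℕ → ℕ := fun j => Nat.gcd (c + j) W with hgdef
  set mm : ℕ → ℕ := fun j => g j / q j ^ e with hmmdef
  set bb : ℕ → ℕ := fun j => (c + j) / g j with hbbdef
  set aa : ℕ → ℕ := fun j => W / g j with haadef
  have hgdvd1 : ∀ j, g j ∣ c + j := fun j => Nat.gcd_dvd_left _ _
  have hgdvd2 : ∀ j, g j ∣ W := fun j => Nat.gcd_dvd_right _ _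
  have hg0 : ∀ j, g j ≠ 0 := fun j h => hW0 (Nat.eq_zero_of_gcd_eq_zero_right h)
  have hgfact : ∀ j < t, (g j).factorization = (c+j).factorization ⊓ W.factorization :=
    fun j hj => Nat.factorization_gcd (hc0 j hj) hW0
  have hbb0 : ∀ j < t, bb j ≠ 0 := by
    intro j hj
    have h1 : 0 < (c+j) / g j :=
      Nat.div_pos (Nat.le_of_dvd (Nat.pos_of_ne_zero (hc0 j hj)) (hgdvd1 j))
        (Nat.pos_of_ne_zero (hg0 j))
    simp only [hbbdef]; omega
  have haa0 : ∀ j, aa j ≠ 0 := by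
    intro j
    have h1 : 0 < W / g j :=
      Nat.div_pos (Nat.le_of_dvd (Nat.pos_of_ne_zero hW0) (hgdvd2 j))
        (Nat.pos_of_ne_zero (hg0 j))
    simp only [haadef]; omega
  have hbbW : ∀ j < t, Nat.Coprime (bb j) W := by
    intro j hj
    by_contra hco
    have hd0 : Nat.gcd (bb j) W ≠ 0 := fun h => hW0 (Nat.eq_zero_of_gcd_eq_zero_right h)
    set r := (Nat.gcd (bb j) W).minFac with hrdef
    have hrp : r.Prime := Nat.minFac_prime hco
    have hrb : r ∣ bb j := (Nat.minFac_dvd _).trans (Nat.gcd_dvd_left _ _)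
    have hrW : r ∣ W := (Nat.minFac_dvd _).trans (Nat.gcd_dvd_right _ _)
    have hpos : 0 < (bb j).factorization r :=
      hrp.factorization_pos_of_dvd (hbb0 j hj) hrb
    have hdiveq : (bb j).factorization = (c+j).factorization - (g j).factorization := by
      simp only [hbbdef]
      exact Nat.factorization_div (hgdvd1 j)
    have hmin : (g j).factorization r
        = min ((c+j).factorization r) (W.factorization r) := by
      rw [hgfact j hj]; rfl
    have hlt := hstar j hj r hrp hrW
    rw [hdiveq] at hpos
    rw [Finsupp.tsub_apply] at hpos
    omega
  have haaP : ∀ j < t, ∀ r, r.Prime → r ∣ W → r ∣ aa j := by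
    intro j hj r hrp hrW
    have hdiveq : (aa j).factorization = W.factorization - (g j).factorization := by
      simp only [haadef]
      exact Nat.factorization_div (hgdvd2 j)
    have hmin : (g j).factorization r
        = min ((c+j).factorization r) (W.factorization r) := by
      rw [hgfact j hj]; rfl
    have hlt := hstar j hj r hrp hrW
    have h1 : 1 ≤ (aa j).factorization r := by
      rw [hdiveq, Finsupp.tsub_apply]
      omega
    have h2 := (Nat.Prime.pow_dvd_iff_le_factorization hrp (haa0 j)).mpr
      (by simpa using h1)
    simpa using h2
  have hgq : ∀ j < t, q j ^ e ∣ g j := fun j hj =>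
    Nat.dvd_gcd (hF1 j hj) ((pow_dvd_pow _ (by omega : e ≤ e+1)).trans (hWq j hj))
  have hgm : ∀ j < t, g j = q j ^ e * mm j := by
    intro j hj
    simp only [hmmdef]
    exact (Nat.mul_div_cancel' (hgq j hj)).symm
  have hmm0 : ∀ j < t, mm j ≠ 0 := by
    intro j hj h
    apply hg0 j
    rw [hgm j hj, h, mul_zero]
  have hmmg : ∀ j < t, mm j ∣ g j := fun j hj => ⟨q j ^ e, by rw [hgm j hj]; ring⟩
  have hqmm : ∀ j < t, ¬ q j ∣ mm j := by
    intro j hj hdvd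
    apply hF2 j hj
    have h1 : q j ^ (e+1) ∣ q j ^ e * mm j := by
      rw [pow_succ]
      exact mul_dvd_mul_left _ hdvd
    exact (h1.trans (by rw [← hgm j hj])).trans (hgdvd1 j)
  have hqimm : ∀ j < t, ∀ i < t, i ≠ j → ¬ q i ∣ mm j := by
    intro j hj i hi hij hdvd
    exact hF3 j hj i hi hij (hdvd.trans ((hmmg j hj).trans (hgdvd1 j)))
  have hmmR : ∀ j < t, mm j ∣ R := by
    intro j hj
    have h1 : mm j ∣ W := (hmmg j hj).trans (hgdvd2 j)
    have hcop : Nat.Coprime (mm j) Qd := by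
      apply Nat.Coprime.prod_right
      intro i hi
      have hi' := Finset.mem_range.mp hi
      have hnd : ¬ q i ∣ mm j := by
        by_cases hij : i = j
        · rw [hij]; exact hqmm j hj
        · exact hqimm j hj i hi' hij
      exact (((hqprime i).coprime_iff_not_dvd).mpr hnd).symm.pow_right _
    exact hcop.dvd_of_dvd_mul_right (hWdef ▸ h1)
  have hmmle : ∀ j < t, mm j ≤ R := fun j hj =>
    Nat.le_of_dvd (Nat.pos_of_ne_zero hR0) (hmmR j hj)
  -- Dickson
  set A : Fin t → ℕ := fun i => aa i.val with hAdef
  set Bc : Fin t → ℕ := fun i => bb i.val with hBcdef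
  have hApos : ∀ i : Fin t, 0 < A i := fun i => Nat.pos_of_ne_zero (haa0 i.val)
  have haadvdW : ∀ j, aa j ∣ W := fun j => Nat.div_dvd_of_dvd (hgdvd2 j)
  have hobstruct : ¬ ∃ m : ℕ, 1 < m ∧ ∀ n : ℕ, m ∣ ∏ i, (A i * n + Bc i) := by
    rintro ⟨m, hm1, hmdvd⟩
    set r := m.minFac with hrdef
    have hrp : r.Prime := Nat.minFac_prime (by omega)
    have hrm : r ∣ m := Nat.minFac_dvd m
    by_cases hrW : r ∣ W
    · have h0 := hrm.trans (hmdvd 0)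
      simp only [mul_zero, zero_add] at h0
      obtain ⟨i, _, hri⟩ := (Prime.dvd_finset_prod_iff hrp.prime _).mp h0
      have := Nat.dvd_gcd hri hrW
      rw [hbbW i.val i.isLt] at this
      exact absurd (Nat.le_of_dvd one_pos this) (by have := hrp.two_le; omega)
    · have hrt : t < r := by
        by_contra h
        exact hrW ((dvd_pow_self r (by omega : t+1 ≠ 0)).trans
          (hWr r (hPmem' r hrp (by omega))))
      haveI : Fact r.Prime := ⟨hrp⟩
      have hcard : Fintype.card (Fin t) < Fintype.card (ZMod r) := by
        rw [Fintype.card_fin, ZMod.card]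
        omega
      have hAne : ∀ i : Fin t, (A i : ZMod r) ≠ 0 := by
        intro i h
        rw [ZMod.natCast_eq_zero_iff] at h
        exact hrW (h.trans (haadvdW i.val))
      set F : Fin t → ZMod r := fun i => - (Bc i : ZMod r) / (A i : ZMod r) with hFdef
      have hnsurj : ¬ Function.Surjective F := fun h =>
        absurd (Fintype.card_le_of_surjective F h) (by omega)
      rw [Function.Surjective] at hnsurj
      push_neg at hnsurj
      obtain ⟨y, hy⟩ := hnsurj
      have hdvd := hrm.trans (hmdvd y.val)
      obtain ⟨i, _, hri⟩ := (Prime.dvd_finset_prod_iff hrp.prime _).mp hdvd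
      rw [← ZMod.natCast_eq_zero_iff] at hri
      push_cast at hri
      rw [ZMod.natCast_val, ZMod.cast_id] at hri
      apply hy i
      simp only [hFdef]
      rw [div_eq_iff (hAne i)]
      linear_combination -hri
  have hinf := HDickson t A Bc hApos hobstruct
  obtain ⟨x, hxmem, hx1⟩ := hinf.exists_gt 0
  have hxprime : ∀ i : Fin t, (A i * x + Bc i).Prime := hxmem
  refine ⟨c + W * x, ?_, ?_⟩
  · have h1 : 0 < W * x := Nat.mul_pos (Nat.pos_of_ne_zero hW0) hx1
    omega
  intro j hj
  set i : Fin t := ⟨j, hj⟩ with hidef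
  set p : ℕ := aa j * x + bb j with hpdef
  have hpj : p.Prime := by
    have := hxprime i
    simpa [hAdef, hBcdef, hidef, hpdef] using this
  have hNj : c + W * x + j = q j ^ e * mm j * p := by
    have h1 : c + j = g j * bb j := (Nat.mul_div_cancel' (hgdvd1 j)).symm
    have h2 : W = g j * aa j := (Nat.mul_div_cancel' (hgdvd2 j)).symm
    calc c + W * x + j = (c + j) + W * x := by ring
      _ = g j * bb j + (g j * aa j) * x := by rw [← h1, ← h2]
      _ = g j * (aa j * x + bb j) := by ring
      _ = q j ^ e * mm j * p := by rw [hgm j hj, hpdef]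
  have hpW : ¬ p ∣ W := by
    intro hdvd
    have hra : p ∣ aa j := haaP j hj p hpj hdvd
    have hrb : p ∣ bb j := by
      have h1 : p ∣ aa j * x := hra.mul_right x
      have h2 : bb j = p - aa j * x := by
        rw [hpdef]; omega
      rw [h2]
      exact Nat.dvd_sub dvd_rfl h1
    have h3 := Nat.dvd_gcd hrb hdvd
    rw [hbbW j hj] at h3
    exact absurd (Nat.le_of_dvd one_pos h3) (by have := hpj.two_le; omega)
  have hpq : p ≠ q j := by
    intro h
    exact hpW (h ▸ ((dvd_pow_self (q j) (by omega : e+1 ≠ 0)).trans (hWq j hj)))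
  have hpmm : ¬ p ∣ mm j := fun h => hpW ((h.trans (hmmR j hj)).trans (Dvd.intro Qd rfl))
  -- phi computation
  have hq' := hqprime j
  have hcop2 : Nat.Coprime (q j ^ e) (mm j) :=
    ((hq'.coprime_iff_not_dvd).mpr (hqmm j hj)).pow_left _
  have hcop1 : Nat.Coprime (q j ^ e * mm j) p := by
    refine Nat.Coprime.symm ?_
    refine (hpj.coprime_iff_not_dvd).mpr ?_
    intro h
    rcases (Nat.Prime.dvd_mul hpj).mp h with h1 | h1
    · exact hpq ((Nat.prime_dvd_prime_iff_eq hpj hq').mp (hpj.dvd_of_dvd_pow h1))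
    · exact hpmm h1
  have hphi : phi B (c + W * x + j) = dig B (q j) + dig B e + phi B (mm j) + dig B p := by
    rw [hNj, phi_mul_coprime (mul_ne_zero (pow_ne_zero _ hq'.ne_zero) (hmm0 j hj))
      hpj.ne_zero hcop1,
      phi_mul_coprime (pow_ne_zero _ hq'.ne_zero) (hmm0 j hj) hcop2,
      phi_prime_pow hq' he2, phi_prime hpj]
  -- digit lower bound
  have hn0 : c + W * x + j ≠ 0 := by
    have h1 : 0 < W * x := Nat.mul_pos (Nat.pos_of_ne_zero hW0) hx1
    omega
  have hdigN : e + dig B p ≤ dig B (c + W * x + j) := by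
    rw [dig_eq_log hB hn0, dig_eq_log hB hpj.ne_zero]
    have hle : B ^ (e + Nat.log B p) ≤ c + W * x + j := by
      rw [hNj]
      calc B ^ (e + Nat.log B p) = B ^ e * B ^ (Nat.log B p) := pow_add _ _ _
        _ ≤ q j ^ e * p :=
          Nat.mul_le_mul (Nat.pow_le_pow_left (hqgt j).2 e) (Nat.pow_log_le_self B hpj.ne_zero)
        _ ≤ (q j ^ e * mm j) * p := by
          have h1 : 0 < mm j := Nat.pos_of_ne_zero (hmm0 j hj)
          have h2 : q j ^ e ≤ q j ^ e * mm j := Nat.le_mul_of_pos_right _ h1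
          exact Nat.mul_le_mul h2 le_rfl
    have := (Nat.le_log_iff_pow_le hB1 hn0).mpr hle
    omega
  -- size bounds
  have hdq : dig B (q j) ≤ q t := (dig_le_self hB hq'.ne_zero).trans (hqle j (by omega))
  have hde : dig B e ≤ D + 1 := by
    rw [dig_eq_log hB (by omega : e ≠ 0)]
    have h1 : Nat.log B e ≤ Nat.log 2 e := Nat.log_anti_left (by norm_num) hB
    have h2 : Nat.log 2 e = D := by rw [hedef]; exact Nat.log_pow (by norm_num) D
    omega
  have hpm : phi B (mm j) ≤ C := by
    have h1 := phi_le hB (hmm0 j hj)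
    have h2 := hmmle j hj
    have h3 : 2 * mm j * mm j ≤ 2 * R * R := by nlinarith
    omega
  -- conclude
  show (k : ℤ) ≤ (dig B (c + W * x + j) : ℤ) - (phi B (c + W * x + j) : ℤ)
  rw [hphi]
  have h1 : (e : ℤ) + dig B p ≤ dig B (c + W * x + j) := by exact_mod_cast hdigN
  have h2 : (k : ℤ) + q t + (D + 1) + C ≤ e := by exact_mod_cast hekey
  have h3 : (dig B (q j) : ℤ) ≤ q t := by exact_mod_cast hdq
  have h4 : (dig B e : ℤ) ≤ D + 1 := by exact_mod_cast hde
  have h5 : (phi B (mm j) : ℤ) ≤ C := by exact_mod_cast hpm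
  push_cast
  omega
end

section
/- In base 10, the smallest 6-frugal number is 40353607 = 7^9; that is, h(40353607) ≥ 6, and every positive integer n < 40353607 satisfies h(n) < 6. -/
lemma dig_le_iff {n k : ℕ} (hn : n ≠ 0) : dig 10 n ≤ k ↔ n < 10 ^ k := by
  rw [dig, Nat.digits_len 10 n (by norm_num) hn, ← Nat.log_lt_iff_lt_pow (by norm_num) hn]
  omega

lemma dig_one_le {n : ℕ} (hn : n ≠ 0) : 1 ≤ dig 10 n := by
  rw [dig, Nat.digits_len 10 n (by norm_num) hn]; omega

theorem statement_19 :
    (6 : ℤ) ≤ hEcon 10 40353607 ∧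
    ∀ n : ℕ, 0 < n → n < 40353607 → hEcon 10 n < 6 := by
  constructor
  · have h79 : (40353607 : ℕ) = 7 ^ 9 := by norm_num
    have hdig : dig 10 40353607 = 8 := by
      have h1 : dig 10 40353607 ≤ 8 := (dig_le_iff (by norm_num)).mpr (by norm_num)
      have h2 : ¬ dig 10 40353607 ≤ 7 := by
        rw [dig_le_iff (by norm_num)]; norm_num
      omega
    have hphi : phi 10 40353607 = 2 := by
      have hp7 : Nat.Prime 7 := by norm_num
      rw [phi, h79, hp7.factorization_pow,
        Finsupp.support_single_ne_zero _ (by norm_num : (9:ℕ) ≠ 0)]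
      simp only [Finset.sum_singleton, Finsupp.single_eq_same]
      have d7 : dig 10 7 = 1 := by
        have := (dig_le_iff (by norm_num : (7:ℕ) ≠ 0)).mpr (by norm_num : (7:ℕ) < 10 ^ 1)
        have := dig_one_le (by norm_num : (7:ℕ) ≠ 0)
        omega
      have d9 : dig 10 9 = 1 := by
        have := (dig_le_iff (by norm_num : (9:ℕ) ≠ 0)).mpr (by norm_num : (9:ℕ) < 10 ^ 1)
        have := dig_one_le (by norm_num : (9:ℕ) ≠ 0)
        omega
      rw [d7, d9]
      norm_num
    rw [hEcon, hdig, hphi]; norm_num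
  · intro n hn hlt
    by_contra hcon
    push_neg at hcon
    rw [hEcon] at hcon
    have hd8 : dig 10 n ≤ 8 := (dig_le_iff hn.ne').mpr (by omega)
    have hkey : 6 + phi 10 n ≤ dig 10 n := by
      have : (6 : ℤ) + (phi 10 n : ℤ) ≤ (dig 10 n : ℤ) := by linarith
      exact_mod_cast this
    have hphi2 : phi 10 n ≤ 2 := by omega
    -- n = 1 case
    rcases eq_or_ne n 1 with h1 | h1
    · subst h1
      have : phi 10 1 = 0 := by simp [phi]
      have hd1 : dig 10 1 ≤ 1 := (dig_le_iff one_ne_zero).mpr (by norm_num)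
      omega
    have h2 : 1 < n := by omega
    -- n ≥ 2 : support nonempty
    have hsne : n.primeFactors.Nonempty := Nat.nonempty_primeFactors.mpr h2
    set f : ℕ → ℕ := fun p => dig 10 p + if n.factorization p = 1 then 0 else
      dig 10 (n.factorization p) with hf
    have hterm : ∀ p ∈ n.factorization.support, 1 ≤ f p := by
      intro p hp
      have hpp : p.Prime := Nat.prime_of_mem_primeFactors (by simpa using hp)
      have := dig_one_le hpp.pos.ne'
      simp only [hf]
      omega
    have hcard : n.factorization.support.card ≤ phi 10 n := by
      rw [phi]
      calc n.factorization.support.card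
          = ∑ _p ∈ n.factorization.support, 1 := by simp
        _ ≤ ∑ p ∈ n.factorization.support, f p := Finset.sum_le_sum hterm
    have hcard2 : n.factorization.support.card ≤ 2 := le_trans hcard hphi2
    have hcard1 : 1 ≤ n.factorization.support.card := by
      rw [Nat.support_factorization]
      exact Finset.card_pos.mpr hsne
    have hprod := Nat.factorization_prod_pow_eq_self hn.ne'
    interval_cases hc : n.factorization.support.card
    · -- card = 1 : n = p ^ e
      obtain ⟨p, hS⟩ := Finset.card_eq_one.mp hc
      have hpmem : p ∈ n.factorization.support := by rw [hS]; exact Finset.mem_singleton_self p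
      have hpp : p.Prime := Nat.prime_of_mem_primeFactors (by simpa using hpmem)
      set e := n.factorization p with he
      have he0 : e ≠ 0 := Finsupp.mem_support_iff.mp hpmem
      clear_value e
      have hne : p ^ e = n := by
        rw [Finsupp.prod, hS, Finset.prod_singleton] at hprod
        rw [he]
        exact hprod
      have hphival : phi 10 n = f p := by
        rw [phi, hS, Finset.sum_singleton]
      rcases eq_or_ne e 1 with he1 | he1
      · -- n = p prime
        have hnp : n = p := by rw [← hne, he1, pow_one]
        have hge : dig 10 p ≤ f p := Nat.le_add_right _ _
        rw [hphival] at hkey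
        rw [hnp] at hkey
        omega
      · -- e ≥ 2
        have hphif : phi 10 n = dig 10 p + dig 10 e := by
          rw [hphival]
          simp only [hf, ← he, if_neg he1]
        have hde : 1 ≤ dig 10 e := dig_one_le he0
        have hdp : 1 ≤ dig 10 p := dig_one_le hpp.pos.ne'
        have hdp1 : dig 10 p = 1 := by omega
        have hde1 : dig 10 e = 1 := by omega
        have hplt : p < 10 := by rw [← pow_one 10]; exact (dig_le_iff hpp.pos.ne').mp (by omega)
        have helt : e < 10 := by rw [← pow_one 10]; exact (dig_le_iff he0).mp (by omega)
        -- dig n = 8 so n ≥ 10^7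
        have hnge : 10 ^ 7 ≤ n := by
          by_contra hlt7
          push_neg at hlt7
          have := (dig_le_iff hn.ne').mpr hlt7
          omega
        have hp2 : 2 ≤ p := hpp.two_le
        have he2 : 2 ≤ e := by omega
        rw [← hne] at hnge hlt
        clear hne hphif hphival hdp hdp1 hde hde1 hcon hkey hphi2 hd8 he he0 he1
        interval_cases p
        · interval_cases e <;> revert hnge hlt <;> norm_num
        · interval_cases e <;> revert hnge hlt <;> norm_num
        · exact absurd hpp (by norm_num)
        · interval_cases e <;> revert hnge hlt <;> norm_num
        · exact absurd hpp (by norm_num)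
        · interval_cases e <;> revert hnge hlt <;> norm_num
        · exact absurd hpp (by norm_num)
        · exact absurd hpp (by norm_num)
    · -- card = 2 : n = p * q
      obtain ⟨p, q, hpq, hS⟩ := Finset.card_eq_two.mp hc
      have hpmem : p ∈ n.factorization.support := by rw [hS]; simp
      have hqmem : q ∈ n.factorization.support := by rw [hS]; simp
      have hpp : p.Prime := Nat.prime_of_mem_primeFactors (by simpa using hpmem)
      have hqp : q.Prime := Nat.prime_of_mem_primeFactors (by simpa using hqmem)
      have hphival : phi 10 n = f p + f q := by
        rw [phi, hS, Finset.sum_pair hpq]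
      have hfp1 : f p = 1 := by
        have := hterm p hpmem; have := hterm q hqmem
        omega
      have hfq1 : f q = 1 := by
        have := hterm p hpmem; have := hterm q hqmem
        omega
      have hexp : ∀ r, r ∈ n.factorization.support → f r = 1 →
          n.factorization r = 1 ∧ r < 10 := by
        intro r hr hfr
        have hr0 : n.factorization r ≠ 0 := Finsupp.mem_support_iff.mp hr
        have hrp : r.Prime := Nat.prime_of_mem_primeFactors (by simpa using hr)
        have hdr : 1 ≤ dig 10 r := dig_one_le hrp.pos.ne'
        have h1 : n.factorization r = 1 := by
          by_contra hne1
          have := dig_one_le hr0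
          simp only [hf, if_neg hne1] at hfr
          omega
        refine ⟨h1, ?_⟩
        have : dig 10 r = 1 := by simp only [hf, h1, if_pos rfl, add_zero] at hfr; exact hfr
        rw [← pow_one 10]
        exact (dig_le_iff hrp.pos.ne').mp (by omega)
      obtain ⟨hep, hplt⟩ := hexp p hpmem hfp1
      obtain ⟨heq, hqlt⟩ := hexp q hqmem hfq1
      have hne : p * q = n := by
        rw [Finsupp.prod, hS, Finset.prod_insert (by simpa using hpq),
          Finset.prod_singleton, hep, heq, pow_one, pow_one] at hprod
        exact hprod
      have hnle : n ≤ 81 := by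
        rw [← hne]
        calc p * q ≤ 9 * 9 := Nat.mul_le_mul (by omega) (by omega)
          _ = 81 := by norm_num
      -- but dig n ≥ 8 forces n ≥ 10^7
      have : dig 10 n ≤ 2 := (dig_le_iff hn.ne').mpr (by omega)
      rw [hphival, hfp1, hfq1] at hkey
      omega
end
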